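/- Let k ≥ 2, N ≥ 2k - 1, and τ(0) = # 0^{N-1}, τ(1) = # 0^{k-2} 1^{N-2k+2} 0^{k-1}. If a k-abelian power u_0 ... u_{e-1} with e ≥ N occurs in τ(w) for an infinite binary word w, then w contains an abelian power v_0 ... v_{e-1} of exponent e with |v_0| = |u_0|/N. -/

import Mathlib

/-- Abelian equivalence of words: each letter occurs equally often. -/
def AbEq {A : Type*} [DecidableEq A] (u v : List A) : Prop :=
  ∀ a : A, u.count a = v.count a

/-- `u` occurs as a (contiguous) factor of the infinite word `x`. -/
def OccursIn {A : Type*} (x : ℕ → A) (u : List A) : Prop :=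
  ∃ i, u = (List.range u.length).map fun j => x (i + j)

/-- An abelian power of exponent `e` and period `m` occurs in `x`. -/
def IsAbPow {A : Type*} [DecidableEq A] (x : ℕ → A) (e m : ℕ) : Prop :=
  0 < e ∧ 0 < m ∧ ∃ u : ℕ → List A,
    (∀ i < e, (u i).length = m) ∧
    (∀ i < e, AbEq (u i) (u 0)) ∧
    OccursIn x (((List.range e).map u).flatten)

/-- The number of (possibly overlapping) occurrences of `z` as a factor of `u`. -/
def FactorCount {A : Type*} [DecidableEq A] (u z : List A) : ℕ :=
  (List.range (u.length + 1 - z.length)).countP fun i =>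
    decide ((u.drop i).take z.length = z)

/-- `k`-abelian equivalence: every nonempty word of length at most `k` occurs
equally often as a factor of `u` and of `v`. -/
def KAbEq {A : Type*} [DecidableEq A] (k : ℕ) (u v : List A) : Prop :=
  ∀ z : List A, z ≠ [] → z.length ≤ k → FactorCount u z = FactorCount v z

/-- A `k`-abelian power of exponent `e` and period `m` occurs in `x`. -/
def IsKAbPow {A : Type*} [DecidableEq A] (x : ℕ → A) (k e m : ℕ) : Prop :=
  0 < e ∧ 0 < m ∧ ∃ u : ℕ → List A,
    (∀ i < e, (u i).length = m) ∧
    (∀ i < e, KAbEq k (u i) (u 0)) ∧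
    OccursIn x (((List.range e).map u).flatten)

/-- The `N`-uniform substitution `τ(0) = # 0^{N-1}`,
`τ(1) = # 0^{k-2} 1^{N-2k+2} 0^{k-1}`, with `# = 2` in `Fin 3`. -/
def tauLetter (k N : ℕ) (a : Fin 2) : List (Fin 3) :=
  if a = 0 then
    (2 : Fin 3) :: List.replicate (N - 1) 0
  else
    (2 : Fin 3) :: (List.replicate (k - 2) 0 ++ List.replicate (N + 2 - 2 * k) 1
      ++ List.replicate (k - 1) 0)

/-- `τ(w)`, applying `τ` letterwise to the infinite binary word `w`. -/
def tauWord (k N : ℕ) (w : ℕ → Fin 2) (n : ℕ) : Fin 3 :=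
  (tauLetter k N (w (n / N))).getD (n % N) 0


section Aux

private def seg {A : Type*} (x : ℕ → A) (b L : ℕ) : List A :=
  (List.range L).map fun j => x (b + j)

private lemma seg_length {A : Type*} (x : ℕ → A) (b L : ℕ) : (seg x b L).length = L := by
  simp [seg]

private lemma seg_add {A : Type*} (x : ℕ → A) (b L1 L2 : ℕ) :
    seg x b (L1 + L2) = seg x b L1 ++ seg x (b + L1) L2 := by
  simp only [seg, List.range_add, List.map_append, List.map_map]
  congr 1
  apply List.map_congr_left
  intro j _
  simp [Function.comp]; ring_nf

private lemma seg_drop {A : Type*} (x : ℕ → A) (b L t : ℕ) (h : t ≤ L) :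
    (seg x b L).drop t = seg x (b + t) (L - t) := by
  have hL : L = t + (L - t) := by omega
  have h2 : (seg x b t).length = t := seg_length _ _ _
  conv_lhs => rw [hL, seg_add]
  have hd : List.drop (seg x b t).length (seg x b t ++ seg x (b + t) (L - t)) = seg x (b + t) (L - t) :=
    List.drop_left
  rw [h2] at hd
  rw [hd]

private lemma seg_take {A : Type*} (x : ℕ → A) (b L t : ℕ) (h : t ≤ L) :
    (seg x b L).take t = seg x b t := by
  have hL : L = t + (L - t) := by omega
  have h2 : (seg x b t).length = t := seg_length _ _ _
  conv_lhs => rw [hL, seg_add]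
  have hd : List.take (seg x b t).length (seg x b t ++ seg x (b + t) (L - t)) = seg x b t :=
    List.take_left
  rw [h2] at hd
  rw [hd]

private lemma countP_seg {A : Type*} (x : ℕ → A) (b L : ℕ) (p : A → Bool) :
    (seg x b L).countP p = (List.range L).countP fun j => p (x (b + j)) := by
  simp [seg, List.countP_map, Function.comp_def]

private lemma count_seg {A : Type*} [DecidableEq A] (x : ℕ → A) (b L : ℕ) (a : A) :
    (seg x b L).count a = (List.range L).countP fun j => decide (x (b + j) = a) := by
  rw [List.count_eq_countP, countP_seg]
  apply List.countP_congr; intro j _; simp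

private lemma flat_len {A : Type*} (m e : ℕ) (u : ℕ → List A)
    (hlen : ∀ i < e, (u i).length = m) :
    (((List.range e).map u).flatten).length = e * m := by
  rw [List.length_flatten, List.map_map]
  have : ∀ l ∈ List.range e, (List.length ∘ u) l = m := by
    intro l hl; simp only [Function.comp]; exact hlen l (by simp at hl; omega)
  rw [List.map_congr_left this]
  simp [Nat.mul_comm]

private lemma chunks {A : Type*} (x : ℕ → A) (m : ℕ) (u : ℕ → List A) :
    ∀ e p, (∀ i < e, (u i).length = m) →
      ((List.range e).map u).flatten = seg x p (e * m) →
      ∀ i < e, u i = seg x (p + i * m) m := by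
  intro e
  induction e with
  | zero => intro p _ _ i hi; omega
  | succ e ih =>
    intro p hlen hflat i hi
    rw [List.range_succ, List.map_append, List.flatten_append] at hflat
    have hseg : seg x p ((e+1) * m) = seg x p (e * m) ++ seg x (p + e * m) m := by
      rw [show (e+1)*m = e*m + m by ring, seg_add]
    rw [hseg] at hflat
    have hlen1 : (((List.range e).map u).flatten).length = e * m :=
      flat_len m e u (fun j hj => hlen j (by omega))
    have hlen2 : (seg x p (e * m)).length = e * m := seg_length _ _ _
    obtain ⟨h1, h2⟩ := List.append_inj hflat (by rw [hlen1, hlen2])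
    rcases Nat.lt_or_ge i e with h | h
    · exact ih p (fun j hj => hlen j (by omega)) h1 i h
    · have : i = e := by omega
      subst this
      simpa using h2

private lemma flat_seg {A : Type*} (w : ℕ → A) (a' q : ℕ) :
    ∀ e, ((List.range e).map (fun i => seg w (a' + i * q) q)).flatten = seg w a' (e * q) := by
  intro e
  induction e with
  | zero => simp [seg]
  | succ e ih =>
    rw [List.range_succ, List.map_append, List.flatten_append, ih,
      show (e+1)*q = e*q + q by ring, seg_add]
    simp

private lemma countP_range_add (L1 L2 : ℕ) (p : ℕ → Bool) :
    (List.range (L1 + L2)).countP p =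
      (List.range L1).countP p + (List.range L2).countP fun j => p (L1 + j) := by
  rw [List.range_add, List.countP_append, List.countP_map]
  rfl

private lemma count_interval (a b : ℕ) : ∀ n : ℕ,
    (List.range n).countP (fun j => decide (a ≤ j ∧ j < b)) = min b n - min a n := by
  intro n
  induction n with
  | zero => simp
  | succ n ih =>
    rw [List.range_succ, List.countP_append, ih]
    simp only [List.countP_cons, List.countP_nil]
    split_ifs with h
    · simp at h; omega
    · simp at h; omega

private lemma mult_iff (N b : ℕ) (hN : 0 < N) :
    ∀ t < N, ((b + t) % N = 0 ↔ t = (N - b % N) % N) := by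
  intro t ht
  have hs : b % N < N := Nat.mod_lt _ hN
  have hbt : (b + t) % N = (b % N + t) % N := by
    conv_lhs => rw [Nat.add_mod, Nat.mod_eq_of_lt ht]
  rw [hbt]
  set s := b % N with hsdef
  rcases Nat.eq_zero_or_pos s with h0 | h0
  · rw [h0]
    simp only [Nat.zero_add, Nat.sub_zero, Nat.mod_self]
    rw [Nat.mod_eq_of_lt ht]
  · have hj : (N - s) % N = N - s := Nat.mod_eq_of_lt (by omega)
    rw [hj]
    rcases Nat.lt_or_ge (s + t) N with h1 | h1
    · rw [Nat.mod_eq_of_lt h1]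
      omega
    · have : (s + t) % N = s + t - N := by
        rw [Nat.mod_eq_sub_mod h1, Nat.mod_eq_of_lt (by omega)]
      rw [this]
      omega

private lemma countP_window' (N b L : ℕ) (hN : 0 < N) (hL : L ≤ N)
    (Q : ℕ → Prop) [DecidablePred Q] :
    (List.range L).countP (fun t => decide ((b + t) % N = 0 ∧ Q t)) =
      if (N - b % N) % N < L ∧ Q ((N - b % N) % N) then 1 else 0 := by
  set j0 := (N - b % N) % N with hj0
  have hcong : (List.range L).countP (fun t => decide ((b + t) % N = 0 ∧ Q t)) =
      (List.range L).countP (fun t => decide (t = j0 ∧ Q t)) := by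
    apply List.countP_congr
    intro t htmem
    simp only [List.mem_range] at htmem
    simp only [decide_eq_true_eq]
    rw [mult_iff N b hN t (by omega)]
  rw [hcong]
  split_ifs with hQ
  · have : (List.range L).countP (fun t => decide (t = j0 ∧ Q t)) =
        (List.range L).countP (fun j => decide (j0 ≤ j ∧ j < j0 + 1)) := by
      apply List.countP_congr
      intro t _
      simp only [decide_eq_true_eq]
      constructor
      · rintro ⟨rfl, -⟩; omega
      · rintro ⟨h1, h2⟩
        have ht : t = j0 := by omega
        exact ⟨ht, ht ▸ hQ.2⟩
    rw [this, count_interval]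
    omega
  · rw [List.countP_eq_zero.mpr]
    intro t htmem
    simp only [List.mem_range] at htmem
    simp only [decide_eq_true_eq]
    rintro ⟨rfl, h⟩
    exact hQ ⟨htmem, h⟩

private lemma getD_rep {A : Type*} (n i : ℕ) (a : A) :
    (List.replicate n a).getD i a = a := by
  rcases Nat.lt_or_ge i n with h | h
  · rw [List.getD_eq_getElem _ _ (by simpa using h)]
    simp
  · rw [List.getD_eq_default _ _ (by simpa using h)]

private lemma getD_rep' {A : Type*} (n i : ℕ) (a d : A) (h : i < n) :
    (List.replicate n a).getD i d = a := by
  rw [List.getD_eq_getElem _ _ (by simpa using h)]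
  simp

private lemma dm_div (N A r : ℕ) (hN : 0 < N) (hr : r < N) : (N * A + r) / N = A := by
  rw [Nat.mul_add_div hN, Nat.div_eq_of_lt hr, Nat.add_zero]

private lemma dm_mod (N A r : ℕ) (hr : r < N) : (N * A + r) % N = r := by
  rw [Nat.mul_add_mod, Nat.mod_eq_of_lt hr]

end Aux

section Aux2

private lemma tauLetter_getD (k N : ℕ) (hk : 2 ≤ k) (hN : 2 * k - 1 ≤ N)
    (a : Fin 2) (r : ℕ) (hr : r < N) :
    (tauLetter k N a).getD r 0 =
      if r = 0 then 2 else if a = 1 ∧ k - 1 ≤ r ∧ r + k ≤ N then 1 else 0 := by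
  have e0 : tauLetter k N 0 = (2:Fin 3) :: List.replicate (N-1) 0 := by simp [tauLetter]
  have e1 : tauLetter k N 1 = (2:Fin 3) :: (List.replicate (k - 2) (0:Fin 3) ++
      (List.replicate (N + 2 - 2 * k) 1 ++ List.replicate (k - 1) 0)) := by
    simp [tauLetter]
  have hcase : a = 0 ∨ a = 1 := by
    fin_cases a
    · exact Or.inl rfl
    · exact Or.inr rfl
  rcases hcase with rfl | rfl
  · rw [e0]
    rcases r with _ | r'
    · simp
    · rw [List.getD_cons_succ, getD_rep]
      rw [if_neg (Nat.succ_ne_zero r'),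
        if_neg (by rintro ⟨h, -⟩; exact absurd h (by decide))]
  · rw [e1]
    rcases r with _ | r'
    · simp
    · rw [List.getD_cons_succ, if_neg (Nat.succ_ne_zero r')]
      rcases Nat.lt_or_ge r' (k - 2) with h1 | h1
      · rw [List.getD_append _ _ _ _ (by simpa using h1), getD_rep]
        rw [if_neg (by rintro ⟨-, h, -⟩; omega)]
      · rw [List.getD_append_right _ _ _ _ (by simpa using h1)]
        rcases Nat.lt_or_ge r' (k - 2 + (N + 2 - 2 * k)) with h2 | h2
        · rw [List.getD_append _ _ _ _ (by simp; omega)]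
          rw [getD_rep' _ _ _ _ (by simp; omega)]
          rw [if_pos ⟨rfl, by omega, by omega⟩]
        · rw [List.getD_append_right _ _ _ _ (by simp; omega), getD_rep]
          rw [if_neg (by rintro ⟨-, -, h⟩; omega)]

private lemma xval (k N : ℕ) (hk : 2 ≤ k) (hN : 2 * k - 1 ≤ N) (w : ℕ → Fin 2) (n : ℕ) :
    tauWord k N w n =
      if n % N = 0 then 2
      else if w (n / N) = 1 ∧ k - 1 ≤ n % N ∧ n % N + k ≤ N then 1 else 0 := by
  have : n % N < N := Nat.mod_lt _ (by omega)
  rw [tauWord, tauLetter_getD k N hk hN _ _ this]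

private lemma x_eq_two_iff (k N : ℕ) (hk : 2 ≤ k) (hN : 2 * k - 1 ≤ N) (w : ℕ → Fin 2) (n : ℕ) :
    tauWord k N w n = 2 ↔ n % N = 0 := by
  rw [xval k N hk hN]
  split_ifs with h1 h2 <;> simp_all

private lemma x_eq_one_iff (k N : ℕ) (hk : 2 ≤ k) (hN : 2 * k - 1 ≤ N) (w : ℕ → Fin 2) (n : ℕ) :
    tauWord k N w n = 1 ↔ (w (n / N) = 1 ∧ k - 1 ≤ n % N ∧ n % N + k ≤ N) := by
  rw [xval k N hk hN]
  split_ifs with h1 h2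
  · constructor
    · intro h; exact absurd h (by decide)
    · rintro ⟨-, h, -⟩; omega
  · simp [h2]
  · constructor
    · intro h; exact absurd h (by decide)
    · intro h; exact absurd h h2

private lemma factorCount_single {A : Type*} [DecidableEq A] (u : List A) (a : A) :
    FactorCount u [a] = u.count a := by
  unfold FactorCount
  simp only [List.length_singleton, Nat.add_sub_cancel]
  induction u with
  | nil => simp
  | cons b t ih =>
    have hlen : (b :: t).length = t.length + 1 := rfl
    rw [hlen, List.range_succ_eq_map]
    rw [List.countP_cons, List.countP_map]
    have h1 : (fun i => decide ((List.drop i (b :: t)).take 1 = [a])) ∘ Nat.succ =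
        fun i => decide ((List.drop i t).take 1 = [a]) := by
      funext i; rfl
    rw [h1, ih, List.count_cons]
    simp only [List.drop_zero, List.take_cons, List.take_zero]
    by_cases hba : b = a
    · subst hba; simp
    · simp [hba, Ne.symm hba]

private lemma count_fin2 (l : List (Fin 2)) : l.count 0 + l.count 1 = l.length := by
  induction l with
  | nil => simp
  | cons b t ih =>
    have hcase : b = 0 ∨ b = 1 := by
      fin_cases b
      · exact Or.inl rfl
      · exact Or.inr rfl
    rcases hcase with rfl | rfl <;>
      simp [List.count_cons, ← ih] <;> omega

private lemma build (w : ℕ → Fin 2) (e q a' : ℕ) (he : 0 < e) (hq : 0 < q)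
    (hcnt : ∀ i < e, (List.range q).countP (fun j => decide (w (a' + i * q + j) = 1)) =
      (List.range q).countP (fun j => decide (w (a' + j) = 1))) :
    IsAbPow w e q := by
  refine ⟨he, hq, fun i => seg w (a' + i * q) q, fun i _ => seg_length _ _ _, ?_, ?_⟩
  · intro i hi b
    show (seg w (a' + i * q) q).count b = (seg w (a' + 0 * q) q).count b
    have h1 : (seg w (a' + i * q) q).count 1 = (seg w (a' + 0 * q) q).count 1 := by
      rw [count_seg, count_seg]
      simp only [Nat.zero_mul, Nat.add_zero]
      exact hcnt i hi
    have hL1 : (seg w (a' + i * q) q).length = q := seg_length _ _ _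
    have hL2 : (seg w (a' + 0 * q) q).length = q := seg_length _ _ _
    have hc1 := count_fin2 (seg w (a' + i * q) q)
    have hc2 := count_fin2 (seg w (a' + 0 * q) q)
    have hcase : b = 0 ∨ b = 1 := by
      fin_cases b
      · exact Or.inl rfl
      · exact Or.inr rfl
    rcases hcase with rfl | rfl
    · omega
    · exact h1
  · refine ⟨a', ?_⟩
    rw [flat_seg w a' q e, seg_length]
    rfl

end Aux2

section Aux3

private lemma ones_in_image (k N : ℕ) (hk : 2 ≤ k) (hN : 2 * k - 1 ≤ N) (w : ℕ → Fin 2) (B : ℕ) :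
    (List.range N).countP (fun j => decide (tauWord k N w (N * B + j) = 1)) =
      if w B = 1 then N + 2 - 2 * k else 0 := by
  have hNpos : 0 < N := by omega
  have hcong : (List.range N).countP (fun j => decide (tauWord k N w (N * B + j) = 1)) =
      (List.range N).countP (fun j => decide (w B = 1 ∧ (k - 1 ≤ j ∧ j < N + 1 - k))) := by
    apply List.countP_congr
    intro j hj
    simp only [List.mem_range] at hj
    simp only [decide_eq_true_eq]
    rw [x_eq_one_iff k N hk hN, dm_div N B j hNpos hj, dm_mod N B j hj]
    constructor
    · rintro ⟨h1, h2, h3⟩; exact ⟨h1, h2, by omega⟩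
    · rintro ⟨h1, h2, h3⟩; exact ⟨h1, h2, by omega⟩
  rw [hcong]
  by_cases hwB : w B = 1
  · rw [if_pos hwB]
    have hcg2 : (List.range N).countP (fun j => decide (w B = 1 ∧ (k - 1 ≤ j ∧ j < N + 1 - k))) =
        (List.range N).countP (fun j => decide (k - 1 ≤ j ∧ j < N + 1 - k)) := by
      apply List.countP_congr
      intro j _
      simp [hwB]
    rw [hcg2, count_interval]
    omega
  · rw [if_neg hwB, List.countP_eq_zero.mpr]
    intro j _
    simp only [decide_eq_true_eq]
    rintro ⟨h1, -⟩
    exact hwB h1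

private lemma ones_aligned (k N : ℕ) (hk : 2 ≤ k) (hN : 2 * k - 1 ≤ N) (w : ℕ → Fin 2) :
    ∀ t B, (List.range (t * N)).countP (fun j => decide (tauWord k N w (N * B + j) = 1)) =
      (N + 2 - 2 * k) * (List.range t).countP (fun j => decide (w (B + j) = 1)) := by
  intro t
  induction t with
  | zero => simp
  | succ t ih =>
    intro B
    rw [show (t+1)*N = t*N + N by ring, countP_range_add, ih B]
    have harith : (fun j => decide (tauWord k N w (N*B + (t*N + j)) = 1)) =
        (fun j => decide (tauWord k N w (N*(B+t) + j) = 1)) := by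
      funext j
      have : N*B + (t*N + j) = N*(B+t) + j := by ring
      rw [this]
    rw [harith, ones_in_image k N hk hN w (B+t)]
    rw [List.range_succ, List.countP_append]
    simp only [List.countP_cons, List.countP_nil, Nat.zero_add]
    by_cases h : w (B+t) = 1 <;> simp [h] <;> ring

private lemma edge_zero (k N : ℕ) (hk : 2 ≤ k) (hN : 2 * k - 1 ≤ N) (w : ℕ → Fin 2)
    (B L : ℕ) (hL : L ≤ k - 1) :
    (List.range L).countP (fun j => decide (tauWord k N w (N * B + j) = 1)) = 0 := by
  rw [List.countP_eq_zero.mpr]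
  intro j hj
  simp only [List.mem_range] at hj
  simp only [decide_eq_true_eq]
  rw [x_eq_one_iff k N hk hN, dm_mod N B j (by omega)]
  rintro ⟨-, h2, -⟩
  omega

private lemma case1count (k N : ℕ) (hk : 2 ≤ k) (hN : 2 * k - 1 ≤ N) (w : ℕ → Fin 2)
    (q s : ℕ) (hs : s ≤ k - 1) (hsN : s < N) (B : ℕ) :
    (List.range (q * N)).countP (fun j => decide (tauWord k N w (N * B + s + j) = 1)) =
      (N + 2 - 2 * k) * (List.range q).countP (fun j => decide (w (B + j) = 1)) := by
  have split2 := countP_range_add s (q*N) (fun j => decide (tauWord k N w (N * B + j) = 1))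
  have hshift : (fun j => decide (tauWord k N w (N*B + (s + j)) = 1)) =
      (fun j => decide (tauWord k N w (N*B + s + j) = 1)) := by
    funext j
    rw [Nat.add_assoc]
  rw [hshift, edge_zero k N hk hN w B s hs, Nat.zero_add] at split2
  have split1 : (List.range (s + q*N)).countP (fun j => decide (tauWord k N w (N * B + j) = 1)) =
      (N + 2 - 2 * k) * (List.range q).countP (fun j => decide (w (B + j) = 1)) := by
    rw [show s + q*N = q*N + s by ring, countP_range_add, ones_aligned k N hk hN w q B]
    have hshift2 : (fun j => decide (tauWord k N w (N*B + (q*N + j)) = 1)) =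
        (fun j => decide (tauWord k N w (N*(B+q) + j) = 1)) := by
      funext j
      have : N*B + (q*N + j) = N*(B+q) + j := by ring
      rw [this]
    rw [hshift2, edge_zero k N hk hN w (B+q) s hs, Nat.add_zero]
  rw [split1] at split2
  exact split2.symm

private lemma case2count (k N : ℕ) (hk : 2 ≤ k) (hN : 2 * k - 1 ≤ N) (w : ℕ → Fin 2)
    (s : ℕ) (hs : k ≤ s) (hsN : s < N) :
    ∀ q B, (List.range (q * N + (N + 1 - k))).countP
        (fun t => decide ((N * B + s + t) % N = 0 ∧ w ((N * B + s + t) / N) = 1)) =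
      (List.range (q + 1)).countP (fun j => decide (w (B + 1 + j) = 1)) := by
  have hNpos : 0 < N := by omega
  intro q
  induction q with
  | zero =>
    intro B
    simp only [Nat.zero_mul, Nat.zero_add]
    rw [countP_window' N (N*B+s) (N+1-k) hNpos (by omega) (fun t => w ((N*B+s+t)/N) = 1)]
    have hmod : (N*B + s) % N = s := dm_mod N B s hsN
    have hj0 : (N - (N*B+s) % N) % N = N - s := by
      rw [hmod]; exact Nat.mod_eq_of_lt (by omega)
    rw [hj0]
    have harg : N*B + s + (N - s) = N*(B+1) + 0 := by
      have : N*(B+1) = N*B + N := by ring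
      omega
    rw [harg, dm_div N (B+1) 0 hNpos hNpos]
    have hlt : N - s < N + 1 - k := by omega
    by_cases h : w (B+1) = 1 <;> simp [h, hlt, List.range_succ]
  | succ q ih =>
    intro B
    rw [show (q+1)*N + (N+1-k) = (q*N + (N+1-k)) + N by ring, countP_range_add, ih B]
    have harith : (fun j => decide ((N*B + s + (q*N + (N+1-k) + j)) % N = 0 ∧
        w ((N*B + s + (q*N + (N+1-k) + j))/N) = 1)) =
        (fun j => decide ((N*(B+q+1) + (s+1-k) + j) % N = 0 ∧
        w ((N*(B+q+1) + (s+1-k) + j)/N) = 1)) := by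
      funext j
      have h1 : N*B + s + (q*N + (N+1-k) + j) = N*(B+q+1) + (s+1-k) + j := by
        have e1 : N*(B+q+1) = N*B + q*N + N := by ring
        omega
      rw [h1]
    rw [harith]
    rw [countP_window' N (N*(B+q+1) + (s+1-k)) N hNpos le_rfl
      (fun t => w ((N*(B+q+1)+(s+1-k)+t)/N) = 1)]
    have hmod : (N*(B+q+1) + (s+1-k)) % N = s+1-k := dm_mod _ _ _ (by omega)
    have hj0 : (N - (N*(B+q+1)+(s+1-k)) % N) % N = N - (s+1-k) := by
      rw [hmod]; exact Nat.mod_eq_of_lt (by omega)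
    rw [hj0]
    have harg : N*(B+q+1) + (s+1-k) + (N - (s+1-k)) = N*(B+q+2) + 0 := by
      have e1 : N*(B+q+2) = N*(B+q+1) + N := by ring
      omega
    rw [harg, dm_div N (B+q+2) 0 hNpos hNpos]
    have hR := countP_range_add (q+1) 1 (fun j => decide (w (B + 1 + j) = 1))
    rw [hR]
    congr 1
    have hlt : N - (s+1-k) < N := by omega
    have heq : B + 1 + (q + 1 + 0) = B + q + 2 := by omega
    by_cases h : w (B+q+2) = 1 <;> simp [h, hlt, List.range_succ, heq]

private lemma seg_eq_z (k N : ℕ) (hk : 2 ≤ k) (hN : 2 * k - 1 ≤ N) (w : ℕ → Fin 2) (c : ℕ) :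
    seg (tauWord k N w) c k = ((2:Fin 3) :: (List.replicate (k-2) (0:Fin 3) ++ [1])) ↔
      (c % N = 0 ∧ w (c / N) = 1) := by
  have hNpos : 0 < N := by omega
  constructor
  · intro h
    have h0 := congrArg (fun l => l.getD 0 0) h
    have hseg0 : (seg (tauWord k N w) c k).getD 0 0 = tauWord k N w c := by
      rw [List.getD_eq_getElem _ _ (by rw [seg_length]; omega)]
      simp [seg]
    simp only [hseg0, List.getD_cons_zero] at h0
    have hc0 : c % N = 0 := (x_eq_two_iff k N hk hN w c).mp h0
    have h1 := congrArg (fun l => l.getD (k-1) 0) h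
    have hseg1 : (seg (tauWord k N w) c k).getD (k-1) 0 = tauWord k N w (c + (k-1)) := by
      rw [List.getD_eq_getElem _ _ (by rw [seg_length]; omega)]
      simp [seg]
    have hz1 : (((2:Fin 3) :: (List.replicate (k-2) (0:Fin 3) ++ [1]))).getD (k-1) 0 = 1 := by
      have hk1 : k - 1 = (k-2) + 1 := by omega
      rw [hk1, List.getD_cons_succ, List.getD_append_right _ _ _ _ (by simp)]
      simp
    simp only [hseg1, hz1] at h1
    have hone := (x_eq_one_iff k N hk hN w (c + (k-1))).mp h1
    have hc : c = N * (c / N) + 0 := by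
      have := Nat.div_add_mod c N
      omega
    have hdiv : (c + (k-1)) / N = c / N := by
      have : c + (k-1) = N * (c/N) + (k-1) := by omega
      rw [this, dm_div N _ _ hNpos (by omega)]
    rw [hdiv] at hone
    exact ⟨hc0, hone.1⟩
  · rintro ⟨hc0, hw1⟩
    have hc : c = N * (c / N) := by
      have := Nat.div_add_mod c N
      omega
    apply List.ext_getElem
    · rw [seg_length]
      simp
      omega
    · intro j hj1 hj2
      rw [seg_length] at hj1
      have hxj : (seg (tauWord k N w) c k)[j] = tauWord k N w (c + j) := by
        simp [seg]
      rw [hxj]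
      have hcj : c + j = N * (c/N) + j := by omega
      rw [hcj, xval k N hk hN, dm_mod N _ j (by omega), dm_div N _ j hNpos (by omega)]
      rcases j with _ | j'
      · simp
      · rw [if_neg (Nat.succ_ne_zero j'), List.getElem_cons_succ]
        rcases Nat.lt_or_ge j' (k-2) with hj' | hj'
        · rw [List.getElem_append_left (by simpa using hj'), List.getElem_replicate]
          rw [if_neg (by rintro ⟨-, h2, -⟩; omega)]
        · have hj'' : j' = k - 2 := by omega
          subst hj''
          rw [List.getElem_append_right (by simp)]
          simp only [List.length_replicate, Nat.sub_self, List.getElem_singleton]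
          rw [if_pos ⟨hw1, by omega, by omega⟩]

end Aux3

/-- If a `k`-abelian power of exponent `e ≥ N` and period `m` occurs in `τ(w)`,
then `w` contains an abelian power of exponent `e` and period `m / N`. -/
theorem abelian_power_in_preimage_of_tau
    (k N : ℕ) (hk : 2 ≤ k) (hN : 2 * k - 1 ≤ N)
    (w : ℕ → Fin 2) (e m : ℕ) (he : N ≤ e)
    (h : IsKAbPow (tauWord k N w) k e m) :
    IsAbPow w e (m / N) := by
  obtain ⟨he0, hm0, u, hlen, hab, i0, hocc⟩ := h
  have hNpos : 0 < N := by omega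
  have hflen : (((List.range e).map u).flatten).length = e * m := flat_len m e u hlen
  rw [hflen] at hocc
  have hocc' : ((List.range e).map u).flatten = seg (tauWord k N w) i0 (e * m) := hocc
  have hui : ∀ i < e, u i = seg (tauWord k N w) (i0 + i * m) m :=
    chunks (tauWord k N w) m u e i0 hlen hocc'
  -- equal counts of the letter # = 2 in all blocks
  have hcount2 : ∀ i < e,
      (List.range m).countP (fun j => decide ((i0 + i * m + j) % N = 0)) =
      (List.range m).countP (fun j => decide ((i0 + 0 * m + j) % N = 0)) := by
    intro i hi
    have hfc := hab i hi [2] (by simp) (by simp; omega)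
    rw [factorCount_single, factorCount_single, hui i hi, hui 0 (by omega),
      count_seg, count_seg] at hfc
    have conv1 : ∀ b, (List.range m).countP (fun j => decide (tauWord k N w (b + j) = 2)) =
        (List.range m).countP (fun j => decide ((b + j) % N = 0)) := by
      intro b
      apply List.countP_congr
      intro j _
      simp only [decide_eq_true_eq]
      exact x_eq_two_iff k N hk hN w _
    rw [conv1, conv1] at hfc
    exact hfc
  set q := (List.range m).countP (fun j => decide ((i0 + 0 * m + j) % N = 0)) with hq
  -- in any window of length t*N there are exactly t multiples of N
  have hcycle : ∀ t b, (List.range (t * N)).countP (fun j => decide ((b + j) % N = 0)) = t := by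
    intro t
    induction t with
    | zero => simp
    | succ t ih =>
      intro b
      rw [show (t+1)*N = t*N + N by ring, countP_range_add, ih b]
      have hcg : (List.range N).countP (fun j => decide ((b + (t*N + j)) % N = 0)) =
          (List.range N).countP (fun j => decide ((b + t*N + j) % N = 0 ∧ True)) := by
        apply List.countP_congr
        intro j _
        simp [Nat.add_assoc]
      rw [hcg, countP_window' N (b + t*N) N hNpos le_rfl (fun _ => True)]
      have h2 : (N - b % N) % N < N := Nat.mod_lt _ hNpos
      have h3 : (N - (b + t*N) % N) % N < N := Nat.mod_lt _ hNpos
      simp [h2, h3]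
  have hsum : ∀ t, t ≤ e →
      (List.range (t * m)).countP (fun j => decide ((i0 + j) % N = 0)) = t * q := by
    intro t
    induction t with
    | zero => simp
    | succ t ih =>
      intro ht
      rw [show (t+1)*m = t*m + m by ring, countP_range_add, ih (by omega)]
      have hcg : (List.range m).countP (fun j => decide ((i0 + (t*m + j)) % N = 0)) =
          (List.range m).countP (fun j => decide ((i0 + t*m + j) % N = 0)) := by
        apply List.countP_congr
        intro j _
        simp [Nat.add_assoc]
      rw [hcg, hcount2 t (by omega)]
      rw [hq]
      simp only [Nat.zero_mul, Nat.add_zero]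
      ring
  have hNq : N * q = m := by
    have h1 := hsum N he
    have h2 := hcycle m i0
    rw [Nat.mul_comm m N] at h2
    have h3 : (List.range (N * m)).countP (fun j => decide ((i0 + j) % N = 0)) = m := h2
    rw [h3] at h1
    omega
  have hqpos : 0 < q := by
    rcases Nat.eq_zero_or_pos q with h0 | h0
    · rw [h0, Nat.mul_zero] at hNq; omega
    · exact h0
  have hmdiv : m / N = q := by
    rw [← hNq]
    exact Nat.mul_div_cancel_left _ hNpos
  obtain ⟨a, s, hsN, hi0eq⟩ : ∃ a s, s < N ∧ i0 = N * a + s :=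
    ⟨i0 / N, i0 % N, Nat.mod_lt _ hNpos, by have := Nat.div_add_mod i0 N; omega⟩
  have hblock : ∀ i, i0 + i * m = N * (a + i * q) + s := by
    intro i
    have h1 : i * m = i * (N * q) := by rw [hNq]
    have h2 : N * (a + i * q) = N * a + i * (N * q) := by ring
    omega
  rw [hmdiv]
  rcases Nat.lt_or_ge s k with hcase | hcase
  -- CASE 1 : s ≤ k - 1
  · apply build w e q a (by omega) hqpos
    intro i hi
    have hone : ∀ i' < e,
        (List.range m).countP (fun j => decide (tauWord k N w (i0 + i' * m + j) = 1)) =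
        (N + 2 - 2 * k) * (List.range q).countP (fun j => decide (w (a + i' * q + j) = 1)) := by
      intro i' hi'
      have hcg : (fun j => decide (tauWord k N w (i0 + i' * m + j) = 1)) =
          (fun j => decide (tauWord k N w (N * (a + i' * q) + s + j) = 1)) := by
        funext j
        rw [hblock i']
      rw [hcg, show m = q * N by rw [← hNq]; ring]
      exact case1count k N hk hN w q s (by omega) hsN (a + i' * q)
    have hfc := hab i hi [1] (by simp) (by simp; omega)
    rw [factorCount_single, factorCount_single, hui i hi, hui 0 (by omega),
      count_seg, count_seg] at hfc
    rw [hone i hi, hone 0 (by omega)] at hfc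
    have hM : 0 < N + 2 - 2 * k := by omega
    have hcc := Nat.eq_of_mul_eq_mul_left hM hfc
    simpa using hcc
  -- CASE 2 : k ≤ s
  · have hzlen : (((2:Fin 3) :: (List.replicate (k-2) (0:Fin 3) ++ [1]))).length = k := by
      simp
      omega
    have hmN : N ≤ m := by
      rw [← hNq]
      exact Nat.le_mul_of_pos_right N hqpos
    have hmk : k ≤ m := by omega
    have hFC : ∀ i' < e, FactorCount (u i') ((2:Fin 3) :: (List.replicate (k-2) (0:Fin 3) ++ [1])) =
        (List.range q).countP (fun j => decide (w (a + i' * q + 1 + j) = 1)) := by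
      intro i' hi'
      rw [hui i' hi']
      unfold FactorCount
      rw [seg_length, hzlen]
      have hstep : (List.range (m + 1 - k)).countP
          (fun t => decide (((seg (tauWord k N w) (i0 + i' * m) m).drop t).take k =
            ((2:Fin 3) :: (List.replicate (k-2) (0:Fin 3) ++ [1])))) =
          (List.range (m + 1 - k)).countP
          (fun t => decide ((i0 + i' * m + t) % N = 0 ∧ w ((i0 + i' * m + t) / N) = 1)) := by
        apply List.countP_congr
        intro t ht
        simp only [List.mem_range] at ht
        simp only [decide_eq_true_eq]
        rw [seg_drop _ _ _ _ (by omega), seg_take _ _ _ _ (by omega)]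
        exact seg_eq_z k N hk hN w _
      rw [hstep]
      obtain ⟨q', hq'⟩ : ∃ q', q = q' + 1 := ⟨q - 1, by omega⟩
      have hlen2 : m + 1 - k = q' * N + (N + 1 - k) := by
        have hm' : m = N * (q' + 1) := by rw [← hNq, hq']
        have he1 : N * (q' + 1) = N * q' + N := by ring
        have he2 : q' * N = N * q' := Nat.mul_comm _ _
        omega
      rw [hlen2]
      have hbase : (fun t => decide ((i0 + i' * m + t) % N = 0 ∧ w ((i0 + i' * m + t) / N) = 1)) =
          (fun t => decide ((N * (a + i' * q) + s + t) % N = 0 ∧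
            w ((N * (a + i' * q) + s + t) / N) = 1)) := by
        funext t
        rw [hblock i']
      rw [hbase, case2count k N hk hN w s hcase hsN q' (a + i' * q), ← hq']
    apply build w e q (a + 1) (by omega) hqpos
    intro i hi
    have hfc := hab i hi ((2:Fin 3) :: (List.replicate (k-2) (0:Fin 3) ++ [1]))
      (by simp) (by rw [hzlen])
    rw [hFC i hi, hFC 0 (by omega)] at hfc
    have hg1 : (fun j => decide (w (a + 1 + i * q + j) = 1)) =
        (fun j => decide (w (a + i * q + 1 + j) = 1)) := by
      funext j
      have : a + 1 + i * q + j = a + i * q + 1 + j := by omega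
      rw [this]
    have hg2 : (fun j => decide (w (a + 1 + j) = 1)) =
        (fun j => decide (w (a + 0 * q + 1 + j) = 1)) := by
      funext j
      have : a + 1 + j = a + 0 * q + 1 + j := by omega
      rw [this]
    rw [hg1, hg2]
    exact hfc
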